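/- Let A, A_1, …, A_M be real n×n matrices, B a real n×m matrix, C a real p×n matrix, and D a real p×m matrix, and fix a horizon N ≥ 1. On a probability space, let (x_k)_{0≤k≤N}, (u_k)_{0≤k<N}, (w_k)_{0≤k<N}, and (σ_k(i))_{0≤k<N, 1≤i≤M} be random vectors/variables with finite second moments such that: x_0 = 0 almost surely; x_{k+1} = (A + Σ_{i=1}^M σ_k(i) A_i) x_k + B u_k + w_k almost surely for each k; for each k, E[w_k x_kᵀ] = 0, E[w_k u_kᵀ] = 0, E[w_k w_kᵀ] = I_n; and for each k, (σ_k(1),…,σ_k(M)) is independent of (x_k, u_k, w_k) with E[σ_k(i)] = 0 and E[σ_k(i)σ_k(j)] = δ(i−j). Then (1/N) Σ_{k=0}^{N−1} E[‖C x_k + D u_k‖²] ≥ inf { (1/N) Σ_{k=0}^{N−1} Tr([C D] V_k [C D]ᵀ) : (V_k)_{0≤k<N} are positive semidefinite real (n+m)×(n+m) matrices with F V_0 Fᵀ = 0 and F V_{k+1} Fᵀ = [A B] V_k [A B]ᵀ + Σ_{i=1}^M A_i F V_k Fᵀ A_iᵀ + I_n for 0 ≤ k < N−1 }, where F = [I_n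 0] is the n×(n+m) matrix selecting the first n coordinates. -/

import Mathlib

open MeasureTheory Matrix ProbabilityTheory

/-- `E[a bᵀ]`: the `d × e` matrix of second moments of two random vectors. -/
noncomputable def crossMoment {Ω : Type*} [MeasurableSpace Ω] (μ : Measure Ω)
    {d e : ℕ} (a : Ω → Fin d → ℝ) (b : Ω → Fin e → ℝ) : Matrix (Fin d) (Fin e) ℝ :=
  Matrix.of fun i j => ∫ ω, a ω i * b ω j ∂μ

/-- Horizontal concatenation `[A B]` of two matrices with the same row index. -/
def hcat {n p q : ℕ} {α : Type*} (A : Matrix (Fin n) (Fin p) α) (B : Matrix (Fin n) (Fin q) α) :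
    Matrix (Fin n) (Fin (p + q)) α :=
  Matrix.of fun i => Fin.append (A i) (B i)

section Aux
variable {Ω : Type*} [MeasurableSpace Ω] {μ : Measure Ω}

lemma int_mul2 {f g : Ω → ℝ} (hf : MemLp f 2 μ) (hg : MemLp g 2 μ) :
    Integrable (fun ω => f ω * g ω) μ := by
  have h := (haveI : ENNReal.HolderTriple 2 2 1 := ⟨by simp [ENNReal.inv_two_add_inv_two]⟩; hg.smul (𝕜 := ℝ) hf (r := 1))
  rw [memLp_one_iff_integrable] at h
  exact h

lemma mem2_mulVec {d e : ℕ} (G : Matrix (Fin e) (Fin d) ℝ) {f : Ω → Fin d → ℝ}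
    (hf : ∀ a, MemLp (fun ω => f ω a) 2 μ) (i : Fin e) :
    MemLp (fun ω => G.mulVec (f ω) i) 2 μ := by
  have h := memLp_finset_sum' (μ := μ) Finset.univ
    (f := fun a ω => G i a * f ω a) (fun a _ => (hf a).const_mul (G i a))
  have he : (∑ a : Fin d, fun ω => G i a * f ω a) = fun ω => G.mulVec (f ω) i := by
    funext ω
    simp [Matrix.mulVec, dotProduct, Finset.sum_apply]
  rwa [he] at h

lemma crossMoment_congr {d e : ℕ} {f f' : Ω → Fin d → ℝ} {g g' : Ω → Fin e → ℝ}
    (hf : ∀ᵐ ω ∂μ, f ω = f' ω) (hg : ∀ᵐ ω ∂μ, g ω = g' ω) :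
    crossMoment μ f g = crossMoment μ f' g' := by
  ext i j
  exact integral_congr_ae (by filter_upwards [hf, hg] with ω h1 h2; rw [h1, h2])

lemma crossMoment_comm {d e : ℕ} (f : Ω → Fin d → ℝ) (g : Ω → Fin e → ℝ) :
    crossMoment μ f g = (crossMoment μ g f)ᵀ := by
  ext i j
  simp [crossMoment, mul_comm]

lemma crossMoment_add_left {d e : ℕ} {f1 f2 : Ω → Fin d → ℝ} {g : Ω → Fin e → ℝ}
    (h1 : ∀ i j, Integrable (fun ω => f1 ω i * g ω j) μ)
    (h2 : ∀ i j, Integrable (fun ω => f2 ω i * g ω j) μ) :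
    crossMoment μ (fun ω => f1 ω + f2 ω) g = crossMoment μ f1 g + crossMoment μ f2 g := by
  ext i j
  simp only [crossMoment, Matrix.of_apply, Matrix.add_apply, Pi.add_apply, add_mul]
  exact integral_add (h1 i j) (h2 i j)

lemma crossMoment_mulVec_left {d e e' : ℕ} (G : Matrix (Fin e) (Fin d) ℝ)
    {f : Ω → Fin d → ℝ} {g : Ω → Fin e' → ℝ}
    (h : ∀ a j, Integrable (fun ω => f ω a * g ω j) μ) :
    crossMoment μ (fun ω => G.mulVec (f ω)) g = G * crossMoment μ f g := by
  ext i j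
  simp only [crossMoment, Matrix.of_apply, Matrix.mul_apply, mulVec, dotProduct,
    Finset.sum_mul]
  rw [integral_finset_sum]
  · refine Finset.sum_congr rfl fun a _ => ?_
    simp_rw [mul_assoc]
    exact integral_const_mul _ _
  · intro a _
    simp_rw [mul_assoc]
    exact ((h a j).const_mul _)

lemma crossMoment_mulVec_right {d e e' : ℕ} (H : Matrix (Fin e) (Fin d) ℝ)
    {f : Ω → Fin e' → ℝ} {g : Ω → Fin d → ℝ}
    (h : ∀ i a, Integrable (fun ω => f ω i * g ω a) μ) :
    crossMoment μ f (fun ω => H.mulVec (g ω)) = crossMoment μ f g * Hᵀ := by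
  calc crossMoment μ f (fun ω => H.mulVec (g ω))
      = (crossMoment μ (fun ω => H.mulVec (g ω)) f)ᵀ := crossMoment_comm _ _
    _ = (H * crossMoment μ g f)ᵀ := by
        rw [crossMoment_mulVec_left H (fun a j => by simpa [mul_comm] using h j a)]
    _ = (crossMoment μ g f)ᵀ * Hᵀ := Matrix.transpose_mul _ _
    _ = crossMoment μ f g * Hᵀ := by rw [← crossMoment_comm]

lemma crossMoment_posSemidef {d : ℕ} {f : Ω → Fin d → ℝ}
    (hf : ∀ a, MemLp (fun ω => f ω a) 2 μ) :
    (crossMoment μ f f).PosSemidef := by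
  refine Matrix.PosSemidef.of_dotProduct_mulVec_nonneg ?_ ?_
  · ext i j
    simp [crossMoment, Matrix.conjTranspose_apply, mul_comm]
  · intro y
    have key : y ⬝ᵥ (crossMoment μ f f).mulVec y = ∫ ω, (∑ a, y a * f ω a) ^ 2 ∂μ := by
      simp only [dotProduct, mulVec, crossMoment, Matrix.of_apply]
      have hpt : ∀ ω, (∑ a, y a * f ω a) ^ 2
          = ∑ i, ∑ j, (y i * y j) * (f ω i * f ω j) := by
        intro ω
        rw [sq, Finset.sum_mul_sum]
        exact Finset.sum_congr rfl fun i _ => Finset.sum_congr rfl fun j _ => by ring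
      simp_rw [hpt]
      rw [integral_finset_sum _ (fun i _ => integrable_finset_sum _
        (fun j _ => (int_mul2 (hf i) (hf j)).const_mul _))]
      refine Finset.sum_congr rfl fun i _ => ?_
      rw [integral_finset_sum _ (fun j _ => (int_mul2 (hf i) (hf j)).const_mul _),
        Finset.mul_sum]
      refine Finset.sum_congr rfl fun j _ => ?_
      rw [integral_const_mul]
      ring
    rw [show star y = y from rfl, key]
    exact integral_nonneg fun ω => sq_nonneg _

lemma crossMoment_trace {d : ℕ} {f : Ω → Fin d → ℝ}
    (hf : ∀ a, MemLp (fun ω => f ω a) 2 μ) :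
    (crossMoment μ f f).trace = ∫ ω, ∑ i, f ω i ^ 2 ∂μ := by
  rw [integral_finset_sum _ (fun i _ => by
    simpa [sq] using int_mul2 (hf i) (hf i))]
  simp [Matrix.trace, crossMoment, Matrix.diag, sq]

lemma hcat_mulVec {n p q : ℕ} (A : Matrix (Fin n) (Fin p) ℝ) (B : Matrix (Fin n) (Fin q) ℝ)
    (v : Fin p → ℝ) (u : Fin q → ℝ) :
    (hcat A B).mulVec (Fin.append v u) = A.mulVec v + B.mulVec u := by
  funext i
  simp [hcat, Matrix.mulVec, dotProduct, Fin.sum_univ_add, Fin.append_left,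
    Fin.append_right]

lemma psd_trace_nonneg {d : ℕ} {P : Matrix (Fin d) (Fin d) ℝ} (hP : P.PosSemidef) :
    0 ≤ P.trace := by
  rw [Matrix.trace]
  refine Finset.sum_nonneg fun i _ => ?_
  have h := hP.dotProduct_mulVec_nonneg (Pi.single i 1)
  simpa [Matrix.mulVec, dotProduct, Pi.single_apply, Finset.sum_ite_eq,
    Matrix.diag] using h

lemma conj_transpose_real {a b : ℕ} (G : Matrix (Fin a) (Fin b) ℝ) : Gᴴ = Gᵀ := by
  ext i j; simp

lemma measMV {d e : ℕ} (G : Matrix (Fin d) (Fin e) ℝ) (a : Fin d) :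
    Measurable (fun v : Fin e → ℝ => G.mulVec v a) := by
  simp only [Matrix.mulVec, dotProduct]
  exact Finset.measurable_sum _ (fun b _ => (measurable_pi_apply b).const_mul _)

end Aux

theorem sdp_lower_bound_finite_horizon
    {Ω : Type*} [MeasurableSpace Ω] (μ : Measure Ω) [IsProbabilityMeasure μ]
    {n m M p N : ℕ} (hN : 1 ≤ N)
    (A : Matrix (Fin n) (Fin n) ℝ) (Ai : Fin M → Matrix (Fin n) (Fin n) ℝ)
    (B : Matrix (Fin n) (Fin m) ℝ)
    (C : Matrix (Fin p) (Fin n) ℝ) (D : Matrix (Fin p) (Fin m) ℝ)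
    (x : ℕ → Ω → Fin n → ℝ) (u : ℕ → Ω → Fin m → ℝ)
    (w : ℕ → Ω → Fin n → ℝ) (σ : ℕ → Fin M → Ω → ℝ)
    (hxmom : ∀ k ≤ N, MemLp (x k) 2 μ)
    (humom : ∀ k < N, MemLp (u k) 2 μ)
    (hwmom : ∀ k < N, MemLp (w k) 2 μ)
    (hσmom : ∀ k < N, ∀ i, MemLp (σ k i) 2 μ)
    (hx0 : ∀ᵐ ω ∂μ, x 0 ω = 0)
    (hxrec : ∀ k < N, ∀ᵐ ω ∂μ, x (k + 1) ω =
      (A + ∑ i, σ k i ω • Ai i).mulVec (x k ω) + B.mulVec (u k ω) + w k ω)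
    (hwx : ∀ k < N, crossMoment μ (w k) (x k) = 0)
    (hwu : ∀ k < N, crossMoment μ (w k) (u k) = 0)
    (hww : ∀ k < N, crossMoment μ (w k) (w k) = 1)
    (hσindep : ∀ k < N, ProbabilityTheory.IndepFun (fun ω i => σ k i ω)
      (fun ω => (x k ω, u k ω, w k ω)) μ)
    (hσmean : ∀ k < N, ∀ i, ∫ ω, σ k i ω ∂μ = 0)
    (hσcov : ∀ k < N, ∀ i j, ∫ ω, σ k i ω * σ k j ω ∂μ = if i = j then (1 : ℝ) else 0)
    (F : Matrix (Fin n) (Fin (n + m)) ℝ)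
    (hF : F = hcat (1 : Matrix (Fin n) (Fin n) ℝ) (0 : Matrix (Fin n) (Fin m) ℝ)) :
    (1 / (N : ℝ)) * ∑ k ∈ Finset.range N,
        ∫ ω, ∑ i, (C.mulVec (x k ω) + D.mulVec (u k ω)) i ^ 2 ∂μ
      ≥ sInf { c : ℝ | ∃ V : ℕ → Matrix (Fin (n + m)) (Fin (n + m)) ℝ,
          (∀ k < N, (V k).PosSemidef) ∧
          F * V 0 * Fᵀ = 0 ∧
          (∀ k < N - 1, F * V (k + 1) * Fᵀ =
            hcat A B * V k * (hcat A B)ᵀ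
              + ∑ i, Ai i * (F * V k * Fᵀ) * (Ai i)ᵀ + 1) ∧
          c = (1 / (N : ℝ)) * ∑ k ∈ Finset.range N,
            (hcat C D * V k * (hcat C D)ᵀ).trace } := by
  -- componentwise second moments
  have hx2 : ∀ k ≤ N, ∀ i, MemLp (fun ω => x k ω i) 2 μ := fun k hk i =>
    (ContinuousLinearMap.proj (R := ℝ) (φ := fun _ : Fin n => ℝ) i).comp_memLp' (hxmom k hk)
  have hu2 : ∀ k < N, ∀ i, MemLp (fun ω => u k ω i) 2 μ := fun k hk i =>
    (ContinuousLinearMap.proj (R := ℝ) (φ := fun _ : Fin m => ℝ) i).comp_memLp' (humom k hk)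
  have hw2 : ∀ k < N, ∀ i, MemLp (fun ω => w k ω i) 2 μ := fun k hk i =>
    (ContinuousLinearMap.proj (R := ℝ) (φ := fun _ : Fin n => ℝ) i).comp_memLp' (hwmom k hk)
  -- the joint state-input process and its second moment matrices
  set z : ℕ → Ω → Fin (n + m) → ℝ := fun k ω => Fin.append (x k ω) (u k ω) with hz
  set V : ℕ → Matrix (Fin (n + m)) (Fin (n + m)) ℝ := fun k => crossMoment μ (z k) (z k)
    with hV
  have hz2 : ∀ k < N, ∀ a, MemLp (fun ω => z k ω a) 2 μ := by
    intro k hk a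
    refine Fin.addCases (fun i => ?_) (fun i => ?_) a
    · have : (fun ω => z k ω (Fin.castAdd m i)) = fun ω => x k ω i := by
        funext ω; simp [hz, Fin.append_left]
      rw [this]; exact hx2 k hk.le i
    · have : (fun ω => z k ω (Fin.natAdd n i)) = fun ω => u k ω i := by
        funext ω; simp [hz, Fin.append_right]
      rw [this]; exact hu2 k hk i
  have hzz : ∀ k < N, ∀ a b, Integrable (fun ω => z k ω a * z k ω b) μ :=
    fun k hk a b => int_mul2 (hz2 k hk a) (hz2 k hk b)
  -- conjugation of V by a matrix
  have hconj : ∀ (e : ℕ) (G : Matrix (Fin e) (Fin (n + m)) ℝ), ∀ k < N,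
      crossMoment μ (fun ω => G.mulVec (z k ω)) (fun ω => G.mulVec (z k ω))
        = G * V k * Gᵀ := by
    intro e G k hk
    rw [crossMoment_mulVec_left G
        (fun a j => int_mul2 (hz2 k hk a) (mem2_mulVec G (hz2 k hk) j)),
      crossMoment_mulVec_right G (fun i a => int_mul2 (hz2 k hk i) (hz2 k hk a)),
      Matrix.mul_assoc]
  have hFz : ∀ k (ω : Ω), F.mulVec (z k ω) = x k ω := by
    intro k ω
    rw [hF, hz]
    rw [hcat_mulVec]
    simp
  have hFVF : ∀ k < N, F * V k * Fᵀ = crossMoment μ (x k) (x k) := by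
    intro k hk
    rw [← hconj (n) F k hk]
    exact crossMoment_congr (ae_of_all _ fun ω => (hFz k ω))
      (ae_of_all _ fun ω => (hFz k ω))
  -- positive semidefiniteness
  have hVpsd : ∀ k, k < N → (V k).PosSemidef := fun k hk => crossMoment_posSemidef (hz2 k hk)
  -- initial condition
  have hinit : F * V 0 * Fᵀ = 0 := by
    rw [hFVF 0 hN]
    ext i j
    simp only [crossMoment, Matrix.of_apply, Matrix.zero_apply]
    have h0 : (fun ω => x 0 ω i * x 0 ω j) =ᵐ[μ] fun _ => (0 : ℝ) := by
      filter_upwards [hx0] with ω h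
      rw [h]
      simp
    rw [integral_congr_ae h0, integral_const]
    simp
  -- recursion
  have hrec : ∀ k < N - 1, F * V (k + 1) * Fᵀ =
      hcat A B * V k * (hcat A B)ᵀ + ∑ i, Ai i * (F * V k * Fᵀ) * (Ai i)ᵀ + 1 := by
    intro k hkN1
    have hk : k < N := by omega
    have hk1 : k + 1 < N := by omega
    set g : Ω → Fin n → ℝ := fun ω => A.mulVec (x k ω) + B.mulVec (u k ω) with hgdef
    set pp : Fin M → Ω → Fin n → ℝ := fun i ω => (Ai i).mulVec (x k ω) with hpdef
    set s : Ω → Fin n → ℝ := fun ω => ∑ i, σ k i ω • pp i ω with hsdef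
    have hg2 : ∀ c, MemLp (fun ω => g ω c) 2 μ := fun c =>
      (mem2_mulVec A (fun i => hx2 k hk.le i) c).add (mem2_mulVec B (fun i => hu2 k hk i) c)
    have hp2 : ∀ i c, MemLp (fun ω => pp i ω c) 2 μ := fun i c =>
      mem2_mulVec (Ai i) (fun j => hx2 k hk.le j) c
    -- master independence tool
    have master : ∀ (φ : (Fin M → ℝ) → ℝ)
        (ψ : ((Fin n → ℝ) × (Fin m → ℝ) × (Fin n → ℝ)) → ℝ),
        Measurable φ → Measurable ψ →
        Integrable (fun ω => φ (fun i => σ k i ω)) μ →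
        Integrable (fun ω => ψ (x k ω, u k ω, w k ω)) μ →
        Integrable (fun ω => φ (fun i => σ k i ω) * ψ (x k ω, u k ω, w k ω)) μ ∧
        ∫ ω, φ (fun i => σ k i ω) * ψ (x k ω, u k ω, w k ω) ∂μ
          = (∫ ω, φ (fun i => σ k i ω) ∂μ) * ∫ ω, ψ (x k ω, u k ω, w k ω) ∂μ := by
      intro φ ψ hφ hψ hiφ hiψ
      have hi : IndepFun (fun ω => φ (fun i => σ k i ω))
          (fun ω => ψ (x k ω, u k ω, w k ω)) μ := (hσindep k hk).comp hφ hψ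
      exact ⟨hi.integrable_mul hiφ hiψ, hi.integral_mul_eq_mul_integral hiφ.aestronglyMeasurable hiψ.aestronglyMeasurable⟩
    -- cross terms with s vanish
    have hcross : ∀ (ψ : ((Fin n → ℝ) × (Fin m → ℝ) × (Fin n → ℝ)) → Fin n → ℝ),
        (∀ c, Measurable (fun t => ψ t c)) →
        (∀ c, MemLp (fun ω => ψ (x k ω, u k ω, w k ω) c) 2 μ) →
        (∀ a b, Integrable (fun ω => ψ (x k ω, u k ω, w k ω) a * s ω b) μ) ∧
        (∀ a b, ∫ ω, ψ (x k ω, u k ω, w k ω) a * s ω b ∂μ = 0) := by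
      intro ψ hm h2
      have hterm : ∀ (a b : Fin n) (i : Fin M),
          Integrable (fun ω => σ k i ω *
            (ψ (x k ω, u k ω, w k ω) a * pp i ω b)) μ ∧
          ∫ ω, σ k i ω * (ψ (x k ω, u k ω, w k ω) a * pp i ω b) ∂μ
            = (∫ ω, σ k i ω ∂μ) * ∫ ω, ψ (x k ω, u k ω, w k ω) a * pp i ω b ∂μ := by
        intro a b i
        exact master (fun v => v i) (fun t => ψ t a * (Ai i).mulVec t.1 b)
          (measurable_pi_apply i)
          ((hm a).mul ((measMV (Ai i) b).comp measurable_fst))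
          ((hσmom k hk i).integrable one_le_two)
          (int_mul2 (h2 a) (hp2 i b))
      have hpt : ∀ (a b : Fin n) (ω : Ω), ψ (x k ω, u k ω, w k ω) a * s ω b
          = ∑ i, σ k i ω * (ψ (x k ω, u k ω, w k ω) a * pp i ω b) := by
        intro a b ω
        have hsb : s ω b = ∑ i, σ k i ω * pp i ω b := by
          rw [hsdef]
          simp [Finset.sum_apply]
        rw [hsb, Finset.mul_sum]
        exact Finset.sum_congr rfl fun i _ => by ring
      constructor
      · intro a b
        exact (integrable_finset_sum _ fun i _ => (hterm a b i).1).congr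
          (ae_of_all _ fun ω => (hpt a b ω).symm)
      · intro a b
        rw [integral_congr_ae (ae_of_all _ (hpt a b)),
          integral_finset_sum _ (fun i _ => (hterm a b i).1)]
        refine Finset.sum_eq_zero fun i _ => ?_
        rw [(hterm a b i).2, hσmean k hk i, zero_mul]
    have hcg := hcross (fun t => A.mulVec t.1 + B.mulVec t.2.1)
      (fun c => ((measMV A c).comp measurable_fst).add
        ((measMV B c).comp (measurable_fst.comp measurable_snd)))
      (fun c => hg2 c)
    have hcw := hcross (fun t => t.2.2)
      (fun c => (measurable_pi_apply c).comp (measurable_snd.comp measurable_snd))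
      (fun c => hw2 k hk c)
    -- zero cross moments among g and w
    have hxw0 : crossMoment μ (x k) (w k) = 0 := by
      rw [crossMoment_comm, hwx k hk]
      simp
    have huw0 : crossMoment μ (u k) (w k) = 0 := by
      rw [crossMoment_comm, hwu k hk]
      simp
    have hgw : crossMoment μ g (w k) = 0 := by
      have hsplit : crossMoment μ (fun ω => A.mulVec (x k ω) + B.mulVec (u k ω)) (w k)
          = crossMoment μ (fun ω => A.mulVec (x k ω)) (w k)
            + crossMoment μ (fun ω => B.mulVec (u k ω)) (w k) :=
        crossMoment_add_left
          (fun i j => int_mul2 (mem2_mulVec A (fun c => hx2 k hk.le c) i) (hw2 k hk j))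
          (fun i j => int_mul2 (mem2_mulVec B (fun c => hu2 k hk c) i) (hw2 k hk j))
      rw [hgdef, hsplit,
        crossMoment_mulVec_left A (fun a j => int_mul2 (hx2 k hk.le a) (hw2 k hk j)),
        crossMoment_mulVec_left B (fun a j => int_mul2 (hu2 k hk a) (hw2 k hk j)),
        hxw0, huw0, Matrix.mul_zero, Matrix.mul_zero, add_zero]
    have hgg : crossMoment μ g g = hcat A B * V k * (hcat A B)ᵀ := by
      rw [hgdef, ← hconj n (hcat A B) k hk]
      exact crossMoment_congr
        (ae_of_all _ fun ω => (hcat_mulVec A B (x k ω) (u k ω)).symm)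
        (ae_of_all _ fun ω => (hcat_mulVec A B (x k ω) (u k ω)).symm)
    -- a.e. decomposition of x (k+1)
    have hsum : ∀ ω : Ω, (∑ i, σ k i ω • Ai i).mulVec (x k ω) = ∑ i, σ k i ω • pp i ω := by
      intro ω
      funext c
      simp only [hpdef, Matrix.mulVec, dotProduct, Matrix.sum_apply, Matrix.smul_apply,
        smul_eq_mul, Finset.sum_apply, Pi.smul_apply, Finset.sum_mul]
      rw [Finset.sum_comm]
      refine Finset.sum_congr rfl fun i _ => ?_
      rw [Finset.mul_sum]
      exact Finset.sum_congr rfl fun b _ => by ring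
    have hae : ∀ᵐ ω ∂μ, x (k + 1) ω = g ω + (w k ω + s ω) := by
      filter_upwards [hxrec k hk] with ω h
      rw [h, Matrix.add_mulVec, hsum ω]
      simp only [hgdef, hsdef]
      abel
    -- assemble, entrywise
    rw [hFVF (k + 1) hk1, hFVF k hk]
    ext a b
    have igg : Integrable (fun ω => g ω a * g ω b) μ := int_mul2 (hg2 a) (hg2 b)
    have igw : Integrable (fun ω => g ω a * w k ω b) μ := int_mul2 (hg2 a) (hw2 k hk b)
    have iwg : Integrable (fun ω => w k ω a * g ω b) μ := int_mul2 (hw2 k hk a) (hg2 b)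
    have iww : Integrable (fun ω => w k ω a * w k ω b) μ :=
      int_mul2 (hw2 k hk a) (hw2 k hk b)
    have igs : Integrable (fun ω => g ω a * s ω b) μ := hcg.1 a b
    have iws : Integrable (fun ω => w k ω a * s ω b) μ := hcw.1 a b
    have isg : Integrable (fun ω => s ω a * g ω b) μ :=
      (hcg.1 b a).congr (ae_of_all _ fun ω => mul_comm _ _)
    have isw : Integrable (fun ω => s ω a * w k ω b) μ :=
      (hcw.1 b a).congr (ae_of_all _ fun ω => mul_comm _ _)
    -- the pure noise-gain term
    have hssterm : ∀ i j : Fin M,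
        Integrable (fun ω => (σ k i ω * σ k j ω) * (pp i ω a * pp j ω b)) μ ∧
        ∫ ω, (σ k i ω * σ k j ω) * (pp i ω a * pp j ω b) ∂μ
          = (∫ ω, σ k i ω * σ k j ω ∂μ) * ∫ ω, pp i ω a * pp j ω b ∂μ := fun i j =>
      master (fun v => v i * v j) (fun t => (Ai i).mulVec t.1 a * (Ai j).mulVec t.1 b)
        ((measurable_pi_apply i).mul (measurable_pi_apply j))
        (((measMV (Ai i) a).comp measurable_fst).mul ((measMV (Ai j) b).comp measurable_fst))
        (int_mul2 (hσmom k hk i) (hσmom k hk j))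
        (int_mul2 (hp2 i a) (hp2 j b))
    have hsspt : ∀ ω : Ω, s ω a * s ω b
        = ∑ i, ∑ j, (σ k i ω * σ k j ω) * (pp i ω a * pp j ω b) := by
      intro ω
      have hsa : s ω a = ∑ i, σ k i ω * pp i ω a := by
        rw [hsdef]; simp [Finset.sum_apply]
      have hsb : s ω b = ∑ i, σ k i ω * pp i ω b := by
        rw [hsdef]; simp [Finset.sum_apply]
      rw [hsa, hsb, Finset.sum_mul_sum]
      exact Finset.sum_congr rfl fun i _ => Finset.sum_congr rfl fun j _ => by ring
    have iss : Integrable (fun ω => s ω a * s ω b) μ :=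
      (integrable_finset_sum _ fun i _ => integrable_finset_sum _ fun j _ =>
        (hssterm i j).1).congr (ae_of_all _ fun ω => (hsspt ω).symm)
    have hAiX : ∀ i : Fin M, crossMoment μ (fun ω => (Ai i).mulVec (x k ω))
        (fun ω => (Ai i).mulVec (x k ω))
          = Ai i * crossMoment μ (x k) (x k) * (Ai i)ᵀ := by
      intro i
      rw [crossMoment_mulVec_left (Ai i) (fun c j => int_mul2 (hx2 k hk.le c) (hp2 i j)),
        crossMoment_mulVec_right (Ai i) (fun c j => int_mul2 (hx2 k hk.le c) (hx2 k hk.le j)),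
        Matrix.mul_assoc]
    have vss : ∫ ω, s ω a * s ω b ∂μ
        = ∑ i, (Ai i * crossMoment μ (x k) (x k) * (Ai i)ᵀ) a b := by
      rw [integral_congr_ae (ae_of_all _ hsspt),
        integral_finset_sum _ (fun i _ => integrable_finset_sum _ fun j _ => (hssterm i j).1)]
      refine Finset.sum_congr rfl fun i _ => ?_
      rw [integral_finset_sum _ (fun j _ => (hssterm i j).1)]
      have hval : ∀ j : Fin M, ∫ ω, (σ k i ω * σ k j ω) * (pp i ω a * pp j ω b) ∂μ
          = (if i = j then (1:ℝ) else 0) * ∫ ω, pp i ω a * pp j ω b ∂μ := fun j => by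
        rw [(hssterm i j).2, hσcov k hk i j]
      rw [Finset.sum_congr rfl fun j _ => hval j]
      have : ∑ j : Fin M, (if i = j then (1:ℝ) else 0) * ∫ ω, pp i ω a * pp j ω b ∂μ
          = ∫ ω, pp i ω a * pp i ω b ∂μ := by
        simp [ite_mul]
      rw [this, ← hAiX i]
      rfl
    -- the individual values
    have vgg : ∫ ω, g ω a * g ω b ∂μ = (hcat A B * V k * (hcat A B)ᵀ) a b := by
      rw [← hgg]; rfl
    have vgw : ∫ ω, g ω a * w k ω b ∂μ = 0 := by
      have h := congrFun (congrFun hgw a) b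
      simpa [crossMoment] using h
    have vwg : ∫ ω, w k ω a * g ω b ∂μ = 0 := by
      rw [integral_congr_ae (ae_of_all μ fun ω => mul_comm (w k ω a) (g ω b))]
      have h := congrFun (congrFun hgw b) a
      simpa [crossMoment] using h
    have vww : ∫ ω, w k ω a * w k ω b ∂μ = (1 : Matrix (Fin n) (Fin n) ℝ) a b := by
      rw [← hww k hk]; rfl
    have vgs : ∫ ω, g ω a * s ω b ∂μ = 0 := hcg.2 a b
    have vws : ∫ ω, w k ω a * s ω b ∂μ = 0 := hcw.2 a b
    have vsg : ∫ ω, s ω a * g ω b ∂μ = 0 := by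
      rw [integral_congr_ae (ae_of_all μ fun ω => mul_comm (s ω a) (g ω b))]
      exact hcg.2 b a
    have vsw : ∫ ω, s ω a * w k ω b ∂μ = 0 := by
      rw [integral_congr_ae (ae_of_all μ fun ω => mul_comm (s ω a) (w k ω b))]
      exact hcw.2 b a
    -- expansion of the left-hand entry
    have lhs1 : crossMoment μ (x (k + 1)) (x (k + 1)) a b
        = ∫ ω, (g ω a * g ω b + g ω a * w k ω b + g ω a * s ω b)
            + (w k ω a * g ω b + w k ω a * w k ω b + w k ω a * s ω b)
            + (s ω a * g ω b + s ω a * w k ω b + s ω a * s ω b) ∂μ := by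
      refine integral_congr_ae ?_
      filter_upwards [hae] with ω h
      have ha' : x (k + 1) ω a = g ω a + (w k ω a + s ω a) := by rw [h]; rfl
      have hb' : x (k + 1) ω b = g ω b + (w k ω b + s ω b) := by rw [h]; rfl
      rw [ha', hb']
      ring
    have I1 : Integrable (fun ω => g ω a * g ω b + g ω a * w k ω b + g ω a * s ω b) μ :=
      (igg.add igw).add igs
    have I2 : Integrable
        (fun ω => w k ω a * g ω b + w k ω a * w k ω b + w k ω a * s ω b) μ :=
      (iwg.add iww).add iws
    have I3 : Integrable (fun ω => s ω a * g ω b + s ω a * w k ω b + s ω a * s ω b) μ :=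
      (isg.add isw).add iss
    have E0 : ∫ ω, (g ω a * g ω b + g ω a * w k ω b + g ω a * s ω b)
            + (w k ω a * g ω b + w k ω a * w k ω b + w k ω a * s ω b)
            + (s ω a * g ω b + s ω a * w k ω b + s ω a * s ω b) ∂μ
        = ((∫ ω, g ω a * g ω b ∂μ) + (∫ ω, g ω a * w k ω b ∂μ) + (∫ ω, g ω a * s ω b ∂μ))
          + ((∫ ω, w k ω a * g ω b ∂μ) + (∫ ω, w k ω a * w k ω b ∂μ)
              + (∫ ω, w k ω a * s ω b ∂μ))
          + ((∫ ω, s ω a * g ω b ∂μ) + (∫ ω, s ω a * w k ω b ∂μ)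
              + (∫ ω, s ω a * s ω b ∂μ)) := by
      have I12 : Integrable (fun ω => (g ω a * g ω b + g ω a * w k ω b + g ω a * s ω b)
          + (w k ω a * g ω b + w k ω a * w k ω b + w k ω a * s ω b)) μ := I1.add I2
      have Igg : Integrable (fun ω => g ω a * g ω b + g ω a * w k ω b) μ := igg.add igw
      have Iwg : Integrable (fun ω => w k ω a * g ω b + w k ω a * w k ω b) μ := iwg.add iww
      have Isg : Integrable (fun ω => s ω a * g ω b + s ω a * w k ω b) μ := isg.add isw
      rw [integral_add I12 I3, integral_add I1 I2,
        integral_add Igg igs, integral_add igg igw,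
        integral_add Iwg iws, integral_add iwg iww,
        integral_add Isg iss, integral_add isg isw]
    rw [lhs1, E0, vgg, vgw, vwg, vww, vgs, vws, vsg, vsw, vss]
    simp only [Matrix.add_apply, Matrix.sum_apply]
    ring
  -- objective identification
  have hobj : ∀ k ∈ Finset.range N,
      ∫ ω, ∑ i, (C.mulVec (x k ω) + D.mulVec (u k ω)) i ^ 2 ∂μ
        = (hcat C D * V k * (hcat C D)ᵀ).trace := by
    intro k hkr
    have hk : k < N := Finset.mem_range.mp hkr
    rw [← hconj p (hcat C D) k hk,
      crossMoment_trace (fun c => mem2_mulVec (hcat C D) (hz2 k hk) c)]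
    refine integral_congr_ae (ae_of_all _ fun ω => ?_)
    show ∑ i, (C.mulVec (x k ω) + D.mulVec (u k ω)) i ^ 2
        = ∑ i, ((hcat C D).mulVec (Fin.append (x k ω) (u k ω))) i ^ 2
    rw [hcat_mulVec C D (x k ω) (u k ω)]
  -- conclude
  rw [ge_iff_le]
  have heq : (1 / (N : ℝ)) * ∑ k ∈ Finset.range N,
      ∫ ω, ∑ i, (C.mulVec (x k ω) + D.mulVec (u k ω)) i ^ 2 ∂μ
      = (1 / (N : ℝ)) * ∑ k ∈ Finset.range N,
        (hcat C D * V k * (hcat C D)ᵀ).trace := by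
    congr 1
    exact Finset.sum_congr rfl hobj
  rw [heq]
  refine csInf_le ?_ ?_
  · refine ⟨0, fun c hc => ?_⟩
    obtain ⟨W, hW, -, -, rfl⟩ := hc
    refine mul_nonneg (by positivity) (Finset.sum_nonneg fun k hkr => ?_)
    have hpsd := (hW k (Finset.mem_range.mp hkr)).mul_mul_conjTranspose_same (hcat C D)
    rw [conj_transpose_real] at hpsd
    exact psd_trace_nonneg hpsd
  · exact Set.mem_setOf.mpr ⟨V, hVpsd, hinit, hrec, rfl⟩
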